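/- Let T be a contraction on a Hilbert space H with ‖D_T‖ = 1, where D_T = (I − T*T)^{1/2}. Then for any norming sequence (xₙ) of D_T, ‖Txₙ‖ → 0; consequently D_T^k ⊥_B T^j for all integers k, j ≥ 1. -/

import Mathlib

open Filter Topology

lemma aux_norm_pow_le_one {H : Type*} [NormedAddCommGroup H] [InnerProductSpace ℂ H]
    (A : H →L[ℂ] H) (hA : ‖A‖ ≤ 1) : ∀ m : ℕ, ‖A ^ m‖ ≤ 1 := by
  intro m
  induction m with
  | zero =>
    rw [pow_zero]
    calc ‖(1 : H →L[ℂ] H)‖ = ‖ContinuousLinearMap.id ℂ H‖ := rfl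
      _ ≤ 1 := ContinuousLinearMap.norm_id_le
  | succ m ih =>
    rw [pow_succ]
    calc ‖A ^ m * A‖ ≤ ‖A ^ m‖ * ‖A‖ := norm_mul_le _ _
      _ ≤ 1 * 1 := mul_le_mul ih hA (norm_nonneg A) zero_le_one
      _ = 1 := one_mul 1

/-- If `T` is a contraction with defect operator `D_T` of norm one, then every norming
sequence of `D_T` satisfies `‖T xₙ‖ → 0`, and `D_T^k ⊥_B T^j` for all `k, j ≥ 1`. -/
theorem defect_orthogonal_to_powers
    {H : Type*} [NormedAddCommGroup H] [InnerProductSpace ℂ H] [CompleteSpace H]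
    (T D : H →L[ℂ] H) (hT : ‖T‖ ≤ 1)
    (hDpos : D.IsPositive)
    (hD2 : D * D = 1 - ContinuousLinearMap.adjoint T * T)
    (hDnorm : ‖D‖ = 1) :
    (∀ x : ℕ → H, (∀ n, ‖x n‖ = 1) →
        Tendsto (fun n => ‖D (x n)‖) atTop (𝓝 ‖D‖) →
        Tendsto (fun n => ‖T (x n)‖) atTop (𝓝 0)) ∧
    (∀ k j : ℕ, 1 ≤ k → 1 ≤ j →
        ∀ lam : ℂ, ‖D ^ k + lam • T ^ j‖ ≥ ‖D ^ k‖) := by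
  have hDsa : ContinuousLinearMap.adjoint D = D := hDpos.isSelfAdjoint
  -- key identity : ‖D x‖² + ‖T x‖² = ‖x‖²
  have key : ∀ x : H, ‖D x‖ ^ 2 + ‖T x‖ ^ 2 = ‖x‖ ^ 2 := by
    intro x
    have h1 : (inner ℂ ((D * D) x) x : ℂ) = inner ℂ (D x) (D x) :=
      calc (inner ℂ ((D * D) x) x : ℂ)
          = inner ℂ ((ContinuousLinearMap.adjoint D) (D x)) x := by
            rw [ContinuousLinearMap.mul_apply, hDsa]
        _ = inner ℂ (D x) (D x) := ContinuousLinearMap.adjoint_inner_left D x (D x)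
    have h2 : (inner ℂ ((D * D) x) x : ℂ) = inner ℂ x x - inner ℂ (T x) (T x) := by
      rw [hD2]
      simp only [ContinuousLinearMap.sub_apply, ContinuousLinearMap.one_apply,
        ContinuousLinearMap.mul_apply, inner_sub_left]
      rw [ContinuousLinearMap.adjoint_inner_left]
    have h3 : (inner ℂ (D x) (D x) : ℂ) = inner ℂ x x - inner ℂ (T x) (T x) := h1 ▸ h2
    rw [inner_self_eq_norm_sq_to_K, inner_self_eq_norm_sq_to_K,
      inner_self_eq_norm_sq_to_K] at h3
    have h4 : (‖D x‖ ^ 2 : ℝ) = ‖x‖ ^ 2 - ‖T x‖ ^ 2 := by exact_mod_cast h3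
    linarith
  -- norms of D-applications are ≤ 1 on the unit sphere
  have hDle : ∀ y : H, ‖D y‖ ≤ ‖y‖ := by
    intro y
    calc ‖D y‖ ≤ ‖D‖ * ‖y‖ := D.le_opNorm y
      _ = ‖y‖ := by rw [hDnorm, one_mul]
  -- part 1
  have part1 : ∀ x : ℕ → H, (∀ n, ‖x n‖ = 1) →
      Tendsto (fun n => ‖D (x n)‖) atTop (𝓝 ‖D‖) →
      Tendsto (fun n => ‖T (x n)‖) atTop (𝓝 0) := by
    intro x hx hnorm
    rw [hDnorm] at hnorm
    have hsq : Tendsto (fun n => ‖T (x n)‖ ^ 2) atTop (𝓝 0) := by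
      have : ∀ n, ‖T (x n)‖ ^ 2 = 1 - ‖D (x n)‖ ^ 2 := by
        intro n
        have := key (x n)
        rw [hx n] at this
        nlinarith
      simp only [this]
      have : Tendsto (fun n => 1 - ‖D (x n)‖ ^ 2) atTop (𝓝 (1 - 1 ^ 2)) :=
        tendsto_const_nhds.sub (hnorm.pow 2)
      simpa using this
    have := hsq.sqrt
    rw [Real.sqrt_zero] at this
    refine this.congr fun n => Real.sqrt_sq (norm_nonneg _)
  refine ⟨part1, ?_⟩
  -- existence of a norming sequence
  have hexists : ∀ n : ℕ, ∃ y : H, ‖y‖ = 1 ∧ 1 - 1 / (n + 1 : ℝ) < ‖D y‖ := by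
    intro n
    by_contra hcon
    push_neg at hcon
    have hb : ‖D‖ ≤ 1 - 1 / (n + 1 : ℝ) := by
      apply ContinuousLinearMap.opNorm_le_bound
      · have : (0:ℝ) < n + 1 := by positivity
        have : 1 / (n + 1 : ℝ) ≤ 1 := by
          rw [div_le_one this]; linarith
        linarith
      · intro y
        rcases eq_or_ne y 0 with rfl | hy
        · simp
        · have hy' : ‖y‖ ≠ 0 := norm_ne_zero_iff.mpr hy
          have h1 : ‖(‖y‖⁻¹ : ℂ) • y‖ = 1 := by
            rw [norm_smul]
            simp [hy']
          have := hcon ((‖y‖⁻¹ : ℂ) • y) h1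
          rw [map_smul, norm_smul, norm_inv, Complex.norm_real,
            Real.norm_of_nonneg (norm_nonneg y)] at this
          have h3 : ‖y‖⁻¹ * ‖D y‖ ≤ 1 - 1 / (n + 1 : ℝ) := this
          calc ‖D y‖ = ‖y‖ * (‖y‖⁻¹ * ‖D y‖) := by
                field_simp
            _ ≤ ‖y‖ * (1 - 1 / (n + 1 : ℝ)) := by
                apply mul_le_mul_of_nonneg_left h3 (norm_nonneg y)
            _ = (1 - 1 / (n + 1 : ℝ)) * ‖y‖ := by ring
    rw [hDnorm] at hb
    have : (0:ℝ) < 1 / (n + 1 : ℝ) := by positivity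
    linarith
  choose x hx1 hx2 using hexists
  have hxD : Tendsto (fun n => ‖D (x n)‖) atTop (𝓝 1) := by
    refine tendsto_of_tendsto_of_tendsto_of_le_of_le
      (g := fun n : ℕ => 1 - 1 / (n + 1 : ℝ)) (h := fun _ : ℕ => (1:ℝ)) ?_ ?_ ?_ ?_
    · have : Tendsto (fun n : ℕ => 1 / (n + 1 : ℝ)) atTop (𝓝 0) :=
        tendsto_one_div_add_atTop_nhds_zero_nat
      have hc : Tendsto (fun _ : ℕ => (1:ℝ)) atTop (𝓝 1) := tendsto_const_nhds
      have := hc.sub this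
      simpa using this
    · exact tendsto_const_nhds
    · exact fun n => le_of_lt (hx2 n)
    · intro n
      calc ‖D (x n)‖ ≤ ‖x n‖ := hDle (x n)
        _ = 1 := hx1 n
  -- D² xₙ - xₙ → 0
  have hApprox : Tendsto (fun n => ‖D (D (x n)) - x n‖) atTop (𝓝 0) := by
    apply squeeze_zero (fun n => norm_nonneg _)
      (g := fun n => Real.sqrt (2 - 2 * ‖D (x n)‖ ^ 2))
    · intro n
      rw [Real.le_sqrt (norm_nonneg _)]
      · have hsq : ‖D (D (x n)) - x n‖ ^ 2
            = ‖D (D (x n))‖ ^ 2 - 2 * RCLike.re (inner ℂ (D (D (x n))) (x n) : ℂ)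
              + ‖x n‖ ^ 2 := norm_sub_sq _ _
        have hre : RCLike.re (inner ℂ (D (D (x n))) (x n) : ℂ) = ‖D (x n)‖ ^ 2 := by
          have h1 : (inner ℂ (D (D (x n))) (x n) : ℂ) = inner ℂ (D (x n)) (D (x n)) := by
            conv_lhs => rw [show D (D (x n)) = (ContinuousLinearMap.adjoint D) (D (x n))
              by rw [hDsa]]
            exact ContinuousLinearMap.adjoint_inner_left D (x n) (D (x n))
          rw [h1]
          exact inner_self_eq_norm_sq (𝕜 := ℂ) (D (x n))
        have hb1 : ‖D (D (x n))‖ ≤ 1 := by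
          calc ‖D (D (x n))‖ ≤ ‖D (x n)‖ := hDle _
            _ ≤ ‖x n‖ := hDle _
            _ = 1 := hx1 n
        have hb2 : ‖D (D (x n))‖ ^ 2 ≤ 1 := by nlinarith [norm_nonneg (D (D (x n)))]
        rw [hsq, hre, hx1 n]
        nlinarith
      · nlinarith [hDle (x n), hx1 n, norm_nonneg (D (x n))]
    · have h2 : Tendsto (fun n => 2 - 2 * ‖D (x n)‖ ^ 2) atTop (𝓝 0) := by
        have hc : Tendsto (fun _ : ℕ => (2:ℝ)) atTop (𝓝 2) := tendsto_const_nhds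
        have := hc.sub ((hxD.pow 2).const_mul (2:ℝ))
        simpa using this
      have := h2.sqrt
      simpa using this
  -- even powers: D^(2m) xₙ - xₙ → 0
  have hEven : ∀ m : ℕ, Tendsto (fun n => ‖(D ^ (2 * m)) (x n) - x n‖) atTop (𝓝 0) := by
    intro m
    induction m with
    | zero => simp
    | succ m ih =>
      apply squeeze_zero (fun n => norm_nonneg _)
        (g := fun n => ‖(D ^ (2 * m)) (x n) - x n‖ + ‖D (D (x n)) - x n‖)
      · intro n
        have hrw : (D ^ (2 * (m + 1))) (x n) - x n
            = (D ^ (2 * m)) (D (D (x n)) - x n) + ((D ^ (2 * m)) (x n) - x n) := by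
          have : D ^ (2 * (m + 1)) = D ^ (2 * m) * (D * D) := by
            rw [show 2 * (m + 1) = 2 * m + 2 from by ring, pow_add, pow_two]
          rw [this]
          simp only [ContinuousLinearMap.mul_apply, map_sub]
          abel
        rw [hrw]
        calc ‖(D ^ (2 * m)) (D (D (x n)) - x n) + ((D ^ (2 * m)) (x n) - x n)‖
            ≤ ‖(D ^ (2 * m)) (D (D (x n)) - x n)‖ + ‖(D ^ (2 * m)) (x n) - x n‖ :=
              norm_add_le _ _
          _ ≤ ‖D (D (x n)) - x n‖ + ‖(D ^ (2 * m)) (x n) - x n‖ := by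
              gcongr
              calc ‖(D ^ (2 * m)) (D (D (x n)) - x n)‖
                  ≤ ‖D ^ (2 * m)‖ * ‖D (D (x n)) - x n‖ :=
                    ContinuousLinearMap.le_opNorm _ _
                _ ≤ 1 * ‖D (D (x n)) - x n‖ := by
                    apply mul_le_mul_of_nonneg_right _ (norm_nonneg _)
                    exact aux_norm_pow_le_one D (le_of_eq hDnorm) (2 * m)
                _ = ‖D (D (x n)) - x n‖ := one_mul _
          _ = ‖(D ^ (2 * m)) (x n) - x n‖ + ‖D (D (x n)) - x n‖ := by ring
      · have := ih.add hApprox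
        simpa using this
  -- all powers: ‖D^k xₙ‖ → 1 for k ≥ 1
  have hPow : ∀ k : ℕ, 1 ≤ k → Tendsto (fun n => ‖(D ^ k) (x n)‖) atTop (𝓝 1) := by
    intro k hk
    rcases Nat.even_or_odd k with ⟨m, hm⟩ | ⟨m, hm⟩
    · -- k = 2m
      have hm' : k = 2 * m := by omega
      rw [tendsto_iff_dist_tendsto_zero]
      apply squeeze_zero (fun n => dist_nonneg)
        (g := fun n => ‖(D ^ k) (x n) - x n‖)
      · intro n
        have : dist ‖(D ^ k) (x n)‖ 1 = |‖(D ^ k) (x n)‖ - ‖x n‖| := by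
          rw [Real.dist_eq, hx1 n]
        rw [this]
        exact abs_norm_sub_norm_le _ _
      · rw [hm']; exact hEven m
    · -- k = 2m+1
      have hm' : k = 2 * m + 1 := by omega
      rw [tendsto_iff_dist_tendsto_zero]
      apply squeeze_zero (fun n => dist_nonneg)
        (g := fun n => ‖(D ^ (2 * m)) (x n) - x n‖ + dist ‖D (x n)‖ 1)
      · intro n
        have hd : dist ‖(D ^ k) (x n)‖ 1
            ≤ dist ‖(D ^ k) (x n)‖ ‖D (x n)‖ + dist ‖D (x n)‖ 1 := dist_triangle _ _ _
        have h1 : dist ‖(D ^ k) (x n)‖ ‖D (x n)‖ ≤ ‖(D ^ (2 * m)) (x n) - x n‖ := by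
          rw [Real.dist_eq]
          have h2 : (D ^ k) (x n) - D (x n) = D ((D ^ (2 * m)) (x n) - x n) := by
            have : D ^ k = D * D ^ (2 * m) := by rw [hm', pow_succ']
            rw [this]
            simp only [ContinuousLinearMap.mul_apply, map_sub]
          calc |‖(D ^ k) (x n)‖ - ‖D (x n)‖| ≤ ‖(D ^ k) (x n) - D (x n)‖ :=
                abs_norm_sub_norm_le _ _
            _ = ‖D ((D ^ (2 * m)) (x n) - x n)‖ := by rw [h2]
            _ ≤ ‖(D ^ (2 * m)) (x n) - x n‖ := hDle _
        linarith
      · have : Tendsto (fun n => dist ‖D (x n)‖ 1) atTop (𝓝 0) :=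
          tendsto_iff_dist_tendsto_zero.mp hxD
        have := (hEven m).add this
        simpa using this
  -- ‖T^j xₙ‖ → 0 for j ≥ 1
  have hTj : ∀ j : ℕ, 1 ≤ j → Tendsto (fun n => ‖(T ^ j) (x n)‖) atTop (𝓝 0) := by
    intro j hj
    have hT0 : Tendsto (fun n => ‖T (x n)‖) atTop (𝓝 0) := by
      apply part1 x hx1
      rw [hDnorm]; exact hxD
    apply squeeze_zero (fun n => norm_nonneg _) (g := fun n => ‖T (x n)‖) _ hT0
    intro n
    obtain ⟨i, rfl⟩ : ∃ i, j = i + 1 := ⟨j - 1, by omega⟩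
    have : T ^ (i + 1) = T ^ i * T := pow_succ T i
    rw [this, ContinuousLinearMap.mul_apply]
    calc ‖(T ^ i) (T (x n))‖ ≤ ‖T ^ i‖ * ‖T (x n)‖ := ContinuousLinearMap.le_opNorm _ _
      _ ≤ 1 * ‖T (x n)‖ := by
          apply mul_le_mul_of_nonneg_right _ (norm_nonneg _)
          exact aux_norm_pow_le_one T hT i
      _ = ‖T (x n)‖ := one_mul _
  -- conclude part 2
  intro k j hk hj lam
  have hDkle : ‖D ^ k‖ ≤ 1 := aux_norm_pow_le_one D (le_of_eq hDnorm) k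
  have hlim : Tendsto (fun n => ‖(D ^ k) (x n)‖ - ‖lam‖ * ‖(T ^ j) (x n)‖) atTop (𝓝 1) := by
    have := (hPow k hk).sub (((hTj j hj).const_mul ‖lam‖))
    simpa using this
  have hge : (1:ℝ) ≤ ‖D ^ k + lam • T ^ j‖ := by
    apply le_of_tendsto' hlim
    intro n
    have h1 : ‖(D ^ k) (x n)‖ - ‖lam‖ * ‖(T ^ j) (x n)‖
        ≤ ‖(D ^ k + lam • T ^ j) (x n)‖ := by
      have heq : (D ^ k) (x n) = (D ^ k + lam • T ^ j) (x n) - lam • (T ^ j) (x n) := by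
        simp only [ContinuousLinearMap.add_apply, ContinuousLinearMap.smul_apply]
        abel
      have hA : ‖(D ^ k) (x n)‖
          ≤ ‖(D ^ k + lam • T ^ j) (x n)‖ + ‖lam‖ * ‖(T ^ j) (x n)‖ := by
        rw [heq]
        simpa [norm_smul] using
          norm_sub_le ((D ^ k + lam • T ^ j) (x n)) (lam • (T ^ j) (x n))
      linarith
    calc ‖(D ^ k) (x n)‖ - ‖lam‖ * ‖(T ^ j) (x n)‖
        ≤ ‖(D ^ k + lam • T ^ j) (x n)‖ := h1
      _ ≤ ‖D ^ k + lam • T ^ j‖ * ‖x n‖ := ContinuousLinearMap.le_opNorm _ _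
      _ = ‖D ^ k + lam • T ^ j‖ := by rw [hx1 n, mul_one]
  exact le_trans hDkle hge
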